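/- Let M ∈ ℝ^{p×p} be symmetric positive definite with distinct eigenvalues λ_1 > … > λ_p and corresponding orthonormal eigenvectors v_1, …, v_p, let B ∈ ℝ^{p×p} be symmetric positive semidefinite, and suppose E_M(B) ⊆ span(v_1, …, v_d) for some d ≤ p. Define the envelope scores φ_j = v_j' B v_j for j = 1, …, d, let (1), …, (d) be a permutation of {1, …, d} with φ_(1) ≥ … ≥ φ_(d), and write v_(j) for the eigenvector corresponding to φ_(j). Then, with u* = dim(E_M(B)), one has E_M(B) = span(v_(1), …, v_(u*)) and φ_(1) ≥ … ≥ φ_(u*) > φ_(u*+1) = … = φ_(d) = 0. -/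

import Mathlib

open Matrix

/-- The orthogonal projection onto a subspace `R` of Euclidean space, as a linear map
on the ambient space. -/
noncomputable def projL {p : ℕ} (R : Submodule ℝ (EuclideanSpace ℝ (Fin p))) :
    EuclideanSpace ℝ (Fin p) →ₗ[ℝ] EuclideanSpace ℝ (Fin p) :=
  R.subtype ∘ₗ (R.orthogonalProjectionOnto).toLinearMap

/-- `R` is a reducing subspace of the symmetric matrix `M` if `M = P_R M P_R + Q_R M Q_R`,
where `P_R` is the orthogonal projection onto `R` and `Q_R = I - P_R`. -/
def IsReducingSubspace {p : ℕ} (M : Matrix (Fin p) (Fin p) ℝ)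
    (R : Submodule ℝ (EuclideanSpace ℝ (Fin p))) : Prop :=
  Matrix.toEuclideanLin M =
    projL R ∘ₗ Matrix.toEuclideanLin M ∘ₗ projL R +
      (LinearMap.id - projL R) ∘ₗ Matrix.toEuclideanLin M ∘ₗ (LinearMap.id - projL R)

/-- The `M`-envelope of `span(B)`: the intersection of all reducing subspaces of `M`
containing the column space of `B`. -/
noncomputable def envelopeM {p : ℕ} (M B : Matrix (Fin p) (Fin p) ℝ) :
    Submodule ℝ (EuclideanSpace ℝ (Fin p)) :=
  sInf {R : Submodule ℝ (EuclideanSpace ℝ (Fin p)) |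
    IsReducingSubspace M R ∧ LinearMap.range (Matrix.toEuclideanLin B) ≤ R}

section Aux
variable {p : ℕ}

lemma projL_mem (R : Submodule ℝ (EuclideanSpace ℝ (Fin p))) (x) : projL R x ∈ R :=
  (R.orthogonalProjectionOnto x).2

lemma projL_of_mem {R : Submodule ℝ (EuclideanSpace ℝ (Fin p))} {x} (h : x ∈ R) :
    projL R x = x :=
  Submodule.starProjection_eq_self_iff.mpr h

lemma projL_of_mem_orth {R : Submodule ℝ (EuclideanSpace ℝ (Fin p))} {x} (h : x ∈ Rᗮ) :
    projL R x = 0 := by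
  simp only [projL, LinearMap.comp_apply, ContinuousLinearMap.coe_coe,
    Submodule.orthogonalProjectionOnto_apply_of_mem_orthogonal h, Submodule.coe_subtype,
    ZeroMemClass.coe_zero]

lemma projL_inner (R : Submodule ℝ (EuclideanSpace ℝ (Fin p))) (x y) :
    (inner ℝ (projL R x) y : ℝ) = inner ℝ x (projL R y) :=
  Submodule.inner_starProjection_left_eq_right R x y

lemma reducing_comm {M : Matrix (Fin p) (Fin p) ℝ} {R : Submodule ℝ (EuclideanSpace ℝ (Fin p))}
    (h : IsReducingSubspace M R) (x : EuclideanSpace ℝ (Fin p)) :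
    projL R (Matrix.toEuclideanLin M x) = Matrix.toEuclideanLin M (projL R x) := by
  have hP : ∀ y, projL R (projL R y) = projL R y := fun y => projL_of_mem (projL_mem R y)
  have hx : ∀ y, Matrix.toEuclideanLin M y =
      projL R (Matrix.toEuclideanLin M (projL R y)) +
        (Matrix.toEuclideanLin M (y - projL R y)
          - projL R (Matrix.toEuclideanLin M (y - projL R y))) := by
    intro y
    have := LinearMap.ext_iff.mp h y
    simpa [LinearMap.add_apply, LinearMap.comp_apply, LinearMap.sub_apply] using this
  have h1 : projL R (Matrix.toEuclideanLin M x) =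
      projL R (Matrix.toEuclideanLin M (projL R x)) := by
    conv_lhs => rw [hx x]
    rw [map_add, map_sub, hP, hP]
    abel
  have h2 : Matrix.toEuclideanLin M (projL R x) =
      projL R (Matrix.toEuclideanLin M (projL R x)) := by
    conv_lhs => rw [hx (projL R x)]
    rw [hP]
    simp
  rw [h1, ← h2]

lemma mem_orth_span {s : Set (EuclideanSpace ℝ (Fin p))} {x}
    (h : ∀ y ∈ s, (inner ℝ y x : ℝ) = 0) : x ∈ (Submodule.span ℝ s)ᗮ := by
  rw [Submodule.mem_orthogonal]
  intro u hu
  induction hu using Submodule.span_induction with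
  | mem y hy => exact h y hy
  | zero => simp
  | add a b _ _ ha hb => simp [inner_add_left, ha, hb]
  | smul c a _ ha => simp [inner_smul_left, ha]

lemma psd_inner_nonneg {B : Matrix (Fin p) (Fin p) ℝ} (hB : B.PosSemidef)
    (x : EuclideanSpace ℝ (Fin p)) : 0 ≤ (inner ℝ x (Matrix.toEuclideanLin B x) : ℝ) := by
  rw [EuclideanSpace.inner_eq_star_dotProduct, ofLp_toEuclideanLin_apply, dotProduct_comm]
  exact hB.dotProduct_mulVec_nonneg _

lemma psd_inner_zero {B : Matrix (Fin p) (Fin p) ℝ} (hB : B.PosSemidef)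
    {x : EuclideanSpace ℝ (Fin p)} (h : (inner ℝ x (Matrix.toEuclideanLin B x) : ℝ) = 0) :
    Matrix.toEuclideanLin B x = 0 := by
  rw [EuclideanSpace.inner_eq_star_dotProduct, ofLp_toEuclideanLin_apply, dotProduct_comm] at h
  have h0 : B *ᵥ (WithLp.ofLp x) = 0 :=
    (hB.dotProduct_mulVec_zero_iff _).mp h
  rw [toEuclideanLin_apply, h0]
  rfl

end Aux

theorem envelope_eq_span_of_top_score_eigvecs
    (p d : ℕ) (hd : d ≤ p)
    (M B : Matrix (Fin p) (Fin p) ℝ)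
    (hMsymm : M.IsSymm) (hM : M.PosDef)
    (hBsymm : B.IsSymm) (hB : B.PosSemidef)
    (ev : Fin p → ℝ) (hev : StrictAnti ev)
    (v : Fin p → EuclideanSpace ℝ (Fin p))
    (hv : Orthonormal ℝ v)
    (heig : ∀ i, Matrix.toEuclideanLin M (v i) = ev i • v i)
    (henv : envelopeM M B ≤ ⨆ i ∈ {i : Fin p | (i : ℕ) < d}, Submodule.span ℝ {v i})
    -- the envelope scores of the first `d` eigenvectors
    (φ : Fin d → ℝ)
    (hφ : ∀ j : Fin d,
      φ j = (inner ℝ (v (Fin.castLE hd j)) (Matrix.toEuclideanLin B (v (Fin.castLE hd j))) : ℝ))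
    -- a permutation sorting the scores in descending order: φ_(1) ≥ … ≥ φ_(d)
    (π : Equiv.Perm (Fin d)) (hsort : Antitone (fun j : Fin d => φ (π j)))
    -- the envelope dimension
    (ustar : ℕ) (hustar : ustar = Module.finrank ℝ (envelopeM M B)) :
    envelopeM M B =
      (⨆ j ∈ {j : Fin d | (j : ℕ) < ustar}, Submodule.span ℝ {v (Fin.castLE hd (π j))}) ∧
    (∀ j : Fin d, (j : ℕ) < ustar → 0 < φ (π j)) ∧
    (∀ j : Fin d, ustar ≤ (j : ℕ) → φ (π j) = 0) := by
  classical
  set T := Matrix.toEuclideanLin M with hTdef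
  set TB := Matrix.toEuclideanLin B with hTBdef
  have hTsym : LinearMap.IsSymmetric T := isHermitian_iff_isSymmetric.mp hM.1
  have hTBsym : LinearMap.IsSymmetric TB := isHermitian_iff_isSymmetric.mp hB.1
  set φt : Fin p → ℝ := fun i => (inner ℝ (v i) (TB (v i)) : ℝ) with hφt
  have hnn : ∀ i, 0 ≤ φt i := fun i => psd_inner_nonneg hB _
  have hz : ∀ i, φt i = 0 → TB (v i) = 0 := fun i h => psd_inner_zero hB h
  -- the orthonormal basis
  have hsp : ⊤ ≤ Submodule.span ℝ (Set.range v) :=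
    (hv.linearIndependent.span_eq_top_of_card_eq_finrank' (by simp)).ge
  set b : OrthonormalBasis (Fin p) ℝ (EuclideanSpace ℝ (Fin p)) :=
    OrthonormalBasis.mk hv hsp with hbdef
  have hb : ⇑b = v := OrthonormalBasis.coe_mk hv hsp
  have hrepr : ∀ x, ∑ i, (inner ℝ (v i) x : ℝ) • v i = x := by
    intro x
    have := b.sum_repr' x
    rwa [hb] at this
  -- eigenspaces are one-dimensional
  have heigsp : ∀ (i : Fin p) (w), T w = ev i • w → ∃ c : ℝ, w = c • v i := by
    intro i w hw
    refine ⟨inner ℝ (v i) w, ?_⟩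
    have hcoef : ∀ j, j ≠ i → (inner ℝ (v j) w : ℝ) = 0 := by
      intro j hj
      have h1 : (inner ℝ (v j) (T w) : ℝ) = ev j * inner ℝ (v j) w := by
        rw [← hTsym, heig j, real_inner_smul_left]
      have h2 : (inner ℝ (v j) (T w) : ℝ) = ev i * inner ℝ (v j) w := by
        rw [hw, real_inner_smul_right]
      have h3 : (ev j - ev i) * (inner ℝ (v j) w : ℝ) = 0 := by
        rw [sub_mul, ← h1, ← h2, sub_self]
      rcases mul_eq_zero.mp h3 with h | h
      · exact absurd (sub_eq_zero.mp h) (fun he => hj (hev.injective he))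
      · exact h
    conv_lhs => rw [← hrepr w]
    rw [Finset.sum_eq_single i]
    · intro j _ hj; rw [hcoef j hj, zero_smul]
    · intro h; exact absurd (Finset.mem_univ i) h
  -- the candidate envelope
  set S : Finset (Fin p) := Finset.univ.filter (fun i => φt i ≠ 0) with hSdef
  have hmemS : ∀ i, i ∈ S ↔ φt i ≠ 0 := by
    intro i; simp [hSdef]
  set W : Submodule ℝ (EuclideanSpace ℝ (Fin p)) := Submodule.span ℝ (v '' ↑S) with hWdef
  have hWmem : ∀ i ∈ S, v i ∈ W :=
    fun i hi => Submodule.subset_span ⟨i, hi, rfl⟩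
  have hWorth : ∀ i ∉ S, v i ∈ Wᗮ := by
    intro i hi
    apply mem_orth_span
    rintro _ ⟨j, hj, rfl⟩
    have : j ≠ i := fun h => hi (h ▸ hj)
    exact hv.2 this
  have hPW_in : ∀ i ∈ S, projL W (v i) = v i := fun i hi => projL_of_mem (hWmem i hi)
  have hPW_out : ∀ i ∉ S, projL W (v i) = 0 := fun i hi => projL_of_mem_orth (hWorth i hi)
  -- W is a reducing subspace containing range TB
  have hWreduce : IsReducingSubspace M W := by
    unfold IsReducingSubspace
    apply b.toBasis.ext
    intro i
    rw [b.coe_toBasis, hb]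
    simp only [LinearMap.add_apply, LinearMap.comp_apply, LinearMap.sub_apply, LinearMap.id_apply]
    by_cases hi : i ∈ S
    · rw [hPW_in i hi, heig i, _root_.map_smul, hPW_in i hi, sub_self, map_zero, map_zero, sub_zero,
        add_zero]
    · rw [hPW_out i hi, map_zero, map_zero, zero_add, sub_zero, heig i, _root_.map_smul,
        hPW_out i hi, smul_zero, sub_zero]
  have hWrange : LinearMap.range TB ≤ W := by
    rintro _ ⟨x, rfl⟩
    rw [← hrepr (TB x)]
    apply Submodule.sum_mem
    intro i _
    by_cases hi : i ∈ S
    · exact Submodule.smul_mem _ _ (hWmem i hi)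
    · have h0 : φt i = 0 := by_contra fun h => hi ((hmemS i).mpr h)
      have : (inner ℝ (v i) (TB x) : ℝ) = 0 := by
        rw [← hTBsym, hz i h0, inner_zero_left]
      rw [this, zero_smul]
      exact Submodule.zero_mem _
  -- the envelope equals W
  have hEnvW : envelopeM M B = W := by
    apply le_antisymm
    · exact sInf_le ⟨hWreduce, hWrange⟩
    · apply le_sInf
      rintro R ⟨hR1, hR2⟩
      rw [hWdef, Submodule.span_le]
      rintro _ ⟨i, hi, rfl⟩
      have hφi : φt i ≠ 0 := (hmemS i).mp hi
      have hTP : T (projL R (v i)) = ev i • projL R (v i) := by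
        rw [← reducing_comm hR1, heig i, _root_.map_smul]
      obtain ⟨c, hc⟩ := heigsp i _ hTP
      have hBvi : TB (v i) ∈ R := hR2 (LinearMap.mem_range_self _ _)
      have h1 : (inner ℝ (projL R (v i)) (TB (v i)) : ℝ) = φt i := by
        rw [projL_inner, projL_of_mem hBvi]
      have h2 : (inner ℝ (projL R (v i)) (TB (v i)) : ℝ) = c * φt i := by
        rw [hc, real_inner_smul_left]
      have hc1 : c = 1 := by
        have : (c - 1) * φt i = 0 := by rw [sub_mul, ← h2, h1, one_mul, sub_self]
        rcases mul_eq_zero.mp this with h | h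
        · linarith [sub_eq_zero.mp h]
        · exact absurd h hφi
      have : v i = projL R (v i) := by rw [hc, hc1, one_smul]
      rw [this]
      exact projL_mem R _
  -- rank count
  have hWrank : Module.finrank ℝ W = S.card := by
    have hsub : ↑(S.image v) ⊆ Set.range v := by
      intro x hx
      simp only [Finset.coe_image, Set.mem_image] at hx
      obtain ⟨i, _, rfl⟩ := hx
      exact Set.mem_range_self i
    have hli : LinearIndependent ℝ ((↑) : ↑(↑(S.image v) : Set (EuclideanSpace ℝ (Fin p))) →
        EuclideanSpace ℝ (Fin p)) := hv.linearIndependent.linearIndepOn_id.mono hsub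
    have : W = Submodule.span ℝ (↑(S.image v) : Set (EuclideanSpace ℝ (Fin p))) := by
      rw [hWdef, Finset.coe_image]
    rw [this, finrank_span_finset_eq_card hli,
      Finset.card_image_of_injective _ hv.linearIndependent.injective]
  have hScard : S.card = ustar := by
    rw [hustar, hEnvW, hWrank]
  -- every index in S is < d
  have hSd : ∀ i ∈ S, (i : ℕ) < d := by
    intro i hi
    by_contra hlt
    have hmemW : v i ∈ envelopeM M B := hEnvW ▸ hWmem i hi
    have hD := henv hmemW
    have hDeq : (⨆ i ∈ {i : Fin p | (i : ℕ) < d}, Submodule.span ℝ {v i}) =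
        Submodule.span ℝ (v '' {i : Fin p | (i : ℕ) < d}) := by
      rw [Set.image_eq_iUnion, Submodule.span_iUnion₂]
    rw [hDeq] at hD
    have horth : v i ∈ (Submodule.span ℝ (v '' {i : Fin p | (i : ℕ) < d}))ᗮ := by
      apply mem_orth_span
      rintro _ ⟨j, hj, rfl⟩
      have : j ≠ i := fun h => hlt (h ▸ hj)
      exact hv.2 this
    have hzero : v i = 0 := by
      have := Submodule.inner_right_of_mem_orthogonal hD horth
      have hnorm := hv.1 i
      rw [real_inner_self_eq_norm_sq] at this
      · nlinarith [norm_nonneg (v i)]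
    have := hv.1 i
    rw [hzero, norm_zero] at this
    exact one_ne_zero this.symm
  -- relate φ and φt
  have hφφt : ∀ j : Fin d, φ j = φt (Fin.castLE hd j) := hφ
  set S' : Finset (Fin d) := Finset.univ.filter (fun j => φ j ≠ 0) with hS'def
  have hSimage : S = S'.image (Fin.castLE hd) := by
    ext i
    simp only [Finset.mem_image, hS'def, Finset.mem_filter, Finset.mem_univ, true_and]
    constructor
    · intro hi
      have hlt := hSd i hi
      refine ⟨⟨(i : ℕ), hlt⟩, ?_, ?_⟩
      · rw [hφφt]
        have : Fin.castLE hd ⟨(i : ℕ), hlt⟩ = i := by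
          ext; rfl
        rw [this]
        exact (hmemS i).mp hi
      · ext; rfl
    · rintro ⟨j, hj, rfl⟩
      rw [hmemS]
      rw [hφφt] at hj
      exact hj
  have hS'card : S'.card = ustar := by
    rw [← hScard, hSimage, Finset.card_image_of_injective _ (Fin.castLE_injective hd)]
  -- the sorted permutation
  set A : Finset (Fin d) := Finset.univ.filter (fun j => φ (π j) ≠ 0) with hAdef
  have hAcard : A.card = ustar := by
    have : A = S'.image π.symm := by
      ext j
      simp [hAdef, hS'def, Equiv.eq_symm_apply]
      constructor
      · intro h; exact ⟨π j, h, by simp⟩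
      · rintro ⟨k, hk, rfl⟩; simpa using hk
    rw [this, Finset.card_image_of_injective _ π.symm.injective, hS'card]
  have hdc : ∀ j k : Fin d, j ≤ k → k ∈ A → j ∈ A := by
    intro j k hjk hk
    simp only [hAdef, Finset.mem_filter, Finset.mem_univ, true_and] at hk ⊢
    have h1 : φ (π k) ≤ φ (π j) := hsort hjk
    have h2 : 0 ≤ φ (π k) := by rw [hφφt]; exact hnn _
    intro h0
    rw [h0] at h1
    exact hk (le_antisymm h1 h2)
  have hiff : ∀ j : Fin d, φ (π j) ≠ 0 ↔ (j : ℕ) < ustar := by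
    intro j
    constructor
    · intro hj
      have hmem : j ∈ A := by simp [hAdef, hj]
      have hsub : Finset.Iic j ⊆ A := fun k hk => hdc k j (Finset.mem_Iic.mp hk) hmem
      have := Finset.card_le_card hsub
      rw [Fin.card_Iic, hAcard] at this
      omega
    · intro hj
      intro h0
      have hnot : j ∉ A := by simp [hAdef, h0]
      have hsub : A ⊆ Finset.Iio j := by
        intro k hk
        rw [Finset.mem_Iio]
        by_contra hkj
        push_neg at hkj
        exact hnot (hdc j k hkj hk)
      have := Finset.card_le_card hsub
      rw [Fin.card_Iio, hAcard] at this
      omega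
  refine ⟨?_, ?_, ?_⟩
  · -- span equality
    have hRHS : (⨆ j ∈ {j : Fin d | (j : ℕ) < ustar},
        Submodule.span ℝ {v (Fin.castLE hd (π j))}) =
        Submodule.span ℝ ((fun j => v (Fin.castLE hd (π j))) '' {j : Fin d | (j : ℕ) < ustar}) := by
      rw [Set.image_eq_iUnion, Submodule.span_iUnion₂]
    have hsets : v '' ↑S = (fun j => v (Fin.castLE hd (π j))) '' {j : Fin d | (j : ℕ) < ustar} := by
      ext x
      simp only [Set.mem_image, Finset.mem_coe, Set.mem_setOf_eq]
      constructor
      · rintro ⟨i, hi, rfl⟩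
        have hlt := hSd i hi
        set j0 := π.symm ⟨(i : ℕ), hlt⟩ with hj0
        have hcast : Fin.castLE hd (π j0) = i := by
          rw [hj0, Equiv.apply_symm_apply]; ext; rfl
        refine ⟨j0, ?_, by rw [hcast]⟩
        rw [← hiff]
        rw [hφφt, hcast]
        exact (hmemS i).mp hi
      · rintro ⟨j, hj, rfl⟩
        refine ⟨Fin.castLE hd (π j), ?_, rfl⟩
        rw [hmemS, ← hφφt]
        exact (hiff j).mpr hj
    rw [hEnvW, hRHS, hWdef, hsets]
  · intro j hj
    have := (hiff j).mpr hj
    have h2 : 0 ≤ φ (π j) := by rw [hφφt]; exact hnn _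
    exact lt_of_le_of_ne h2 (Ne.symm this)
  · intro j hj
    by_contra h0
    have := (hiff j).mp h0
    omega
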